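/- Let m be an odd positive integer and D a positive integer with D ≡ 0 or 3 (mod 4). Then the series of Salié sums Σ_{c > 0, c ≡ 0 (mod 16)} S_{4D}(m, c) · sinh(8πm√D / c) converges to 0; that is, the partial sums Σ_{0 < c ≤ X, 16 | c} S_{4D}(m, c) · sinh(4πm√(4D)/c) tend to 0 as X → ∞. -/

import Mathlib

open Filter Topology

/-!
Statement 11: For odd `m ≥ 1` and `D ≡ 0, 3 (mod 4)` positive, the series
`Σ_{c > 0, 16 | c} S_{4D}(m, c) sinh(4πm√(4D)/c)` converges to `0`: its partial
sums over `0 < c ≤ X` tend to `0` as `X → ∞`.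
-/


lemma salie_zero (m k D : ℕ) (hmodd : Odd m) (hk : 0 < k) :
    (∑ x ∈ Finset.filter (fun x => 16*k ∣ (x ^ 2 + 4*D)) (Finset.range (16*k)),
      Complex.exp (2 * Real.pi * Complex.I * (2 * m * x) / (16*k))) = 0 := by
  have hgoal : (16 : ℂ) * (k : ℂ) = ((16 * k : ℕ) : ℂ) := by push_cast; ring
  simp only [hgoal]
  set n := 16 * k with hn
  set s := Finset.filter (fun x => n ∣ (x ^ 2 + 4*D)) (Finset.range n) with hs
  set f : ℕ → ℂ := fun x => Complex.exp (2 * Real.pi * Complex.I * (2 * m * x) / n) with hf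
  have hnpos : 0 < n := by omega
  have hnC : (n : ℂ) ≠ 0 := by exact_mod_cast hnpos.ne'
  -- every solution is even
  have heven : ∀ x ∈ s, 2 ∣ x := by
    intro x hx
    simp only [hs, Finset.mem_filter, Finset.mem_range] at hx
    have h2 : 2 ∣ x ^ 2 + 4 * D := dvd_trans (by omega) hx.2
    have : 2 ∣ x ^ 2 := by omega
    exact Nat.Prime.dvd_of_dvd_pow Nat.prime_two this
  -- the shift maps preserve s
  have hmem : ∀ (t : ℕ), 4 ∣ t → ∀ x ∈ s, (x + t * k) % n ∈ s := by
    intro t ht x hx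
    obtain ⟨y, hy⟩ := heven x hx
    simp only [hs, Finset.mem_filter, Finset.mem_range] at hx ⊢
    refine ⟨Nat.mod_lt _ hnpos, ?_⟩
    obtain ⟨v, hv⟩ := ht
    have hdvd : n ∣ (x + t * k) ^ 2 + 4 * D := by
      have : (x + t * k) ^ 2 + 4 * D = (x ^ 2 + 4 * D) + n * (v * y + v * v * k) := by
        subst hy hv; rw [hn]; ring
      rw [this]
      exact dvd_add hx.2 (Dvd.intro _ rfl)
    have hmodeq : ((x + t * k) % n) ^ 2 + 4 * D ≡ (x + t * k) ^ 2 + 4 * D [MOD n] :=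
      Nat.ModEq.add_right _ (Nat.ModEq.pow _ (Nat.mod_modEq _ _))
    exact (Nat.modEq_zero_iff_dvd).mp
      (hmodeq.trans ((Nat.modEq_zero_iff_dvd).mpr hdvd))
  -- sign flip
  have hsign : ∀ x ∈ s, f ((x + 4 * k) % n) = - f x := by
    intro x hx
    set q := (x + 4 * k) / n with hq
    set r := (x + 4 * k) % n with hr
    have hxr : x + 4 * k = n * q + r := (Nat.div_add_mod _ _).symm
    have hrC : (r : ℂ) = (x : ℂ) + 4 * k - n * q := by
      have : (x : ℂ) + 4 * k = n * q + r := by exact_mod_cast congrArg (Nat.cast : ℕ → ℂ) hxr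
      linear_combination -this
    have key : 2 * (Real.pi : ℂ) * Complex.I * (2 * m * r) / n
        = 2 * (Real.pi : ℂ) * Complex.I * (2 * m * x) / n
          + (m : ℂ) * (Real.pi * Complex.I)
          + (-(2 * m * q) : ℤ) * (2 * Real.pi * Complex.I) := by
      rw [hrC]
      have hnval : (n : ℂ) = 16 * k := by push_cast [hn]; ring
      rw [hnval]
      have hkC : (k : ℂ) ≠ 0 := by exact_mod_cast hk.ne'
      field_simp
      push_cast
      ring
    rw [hf]
    simp only
    rw [key, Complex.exp_add, Complex.exp_add]
    rw [Complex.exp_int_mul_two_pi_mul_I]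
    rw [show ((m : ℂ) * (Real.pi * Complex.I)) = (m : ℕ) * (Real.pi * Complex.I) by norm_cast]
    rw [Complex.exp_nat_mul, Complex.exp_pi_mul_I, hmodd.neg_one_pow]
    ring
  -- reindexing
  have h1 : ∑ x ∈ s, f ((x + 4 * k) % n) = ∑ x ∈ s, f x := by
    apply Finset.sum_nbij' (i := fun x => (x + 4 * k) % n) (j := fun x => (x + 12 * k) % n)
    · intro a ha; exact hmem 4 (by norm_num) a ha
    · intro a ha; exact hmem 12 (by norm_num) a ha
    · intro a ha
      simp only [hs, Finset.mem_filter, Finset.mem_range] at ha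
      have : ((a + 4 * k) % n + 12 * k) % n = (a + 4 * k + 12 * k) % n := Nat.mod_add_mod _ _ _
      rw [this, show a + 4 * k + 12 * k = a + n by omega, Nat.add_mod_right,
        Nat.mod_eq_of_lt ha.1]
    · intro a ha
      simp only [hs, Finset.mem_filter, Finset.mem_range] at ha
      have : ((a + 12 * k) % n + 4 * k) % n = (a + 12 * k + 4 * k) % n := Nat.mod_add_mod _ _ _
      rw [this, show a + 12 * k + 4 * k = a + n by omega, Nat.add_mod_right,
        Nat.mod_eq_of_lt ha.1]
    · intro a ha; rfl
  have h2 : ∑ x ∈ s, f ((x + 4 * k) % n) = - ∑ x ∈ s, f x := by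
    rw [← Finset.sum_neg_distrib]
    exact Finset.sum_congr rfl hsign
  have h3 : (∑ x ∈ s, f x) = - ∑ x ∈ s, f x := h1.symm.trans h2
  have h4 : (2 : ℂ) * ∑ x ∈ s, f x = 0 := by linear_combination h3
  simpa using h4

/-- The Salié-type exponential sum `S_Δ(m, c) = Σ_{x (mod c), x² ≡ −Δ (mod c)} e(2mx/c)`. -/
noncomputable def salie (Δ m c : ℕ) : ℂ :=
  ∑ x ∈ Finset.filter (fun x => c ∣ (x ^ 2 + Δ)) (Finset.range c),
    Complex.exp (2 * Real.pi * Complex.I * (2 * m * x) / c)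

theorem salie_series_tendsto_zero (m : ℕ) (hm : 0 < m) (hmodd : Odd m)
    (D : ℕ) (hD : 0 < D) (hmod : D % 4 = 0 ∨ D % 4 = 3) :
    Tendsto (fun X : ℕ =>
        ∑ c ∈ Finset.filter (fun c => 0 < c ∧ 16 ∣ c) (Finset.range (X + 1)),
          salie (4 * D) m c * (Real.sinh (4 * Real.pi * m * Real.sqrt (4 * D) / c) : ℂ))
      atTop (nhds 0) := by
  have hzero : ∀ X : ℕ,
      (∑ c ∈ Finset.filter (fun c => 0 < c ∧ 16 ∣ c) (Finset.range (X + 1)),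
        salie (4 * D) m c * (Real.sinh (4 * Real.pi * m * Real.sqrt (4 * D) / c) : ℂ)) = 0 := by
    intro X
    apply Finset.sum_eq_zero
    intro c hc
    simp only [Finset.mem_filter, Finset.mem_range] at hc
    obtain ⟨hcX, hcpos, k, rfl⟩ := hc
    have hk : 0 < k := by omega
    have hs : salie (4 * D) m (16 * k) = 0 := by
      rw [salie]
      have := salie_zero m k D hmodd hk
      convert this using 2 with x
      push_cast
      ring
    rw [hs, zero_mul]
  simp only [hzero]
  exact tendsto_const_nhds
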